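/- Let G be a finite nonempty threshold graph. Then χ(G) = Ψ(G), i.e., the chromatic number of G equals its achromatic number. (This is the achromatic-number part of the theorem asserting χ(G) = Σ(G) = Ψ(G) for threshold graphs.) -/

import Mathlib

/-- The graph `2K₂`: two disjoint edges, on four vertices. -/
def twoK2 : SimpleGraph (Fin 4) := SimpleGraph.fromEdgeSet {s(0, 1), s(2, 3)}

/-- A threshold graph: a simple graph with no induced subgraph isomorphic to `2K₂`, `C₄`
or `P₄`. -/
def SimpleGraph.IsThreshold {α : Type*} (G : SimpleGraph α) : Prop :=
  IsEmpty (twoK2 ↪g G) ∧ IsEmpty (SimpleGraph.cycleGraph 4 ↪g G) ∧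
    IsEmpty (SimpleGraph.pathGraph 4 ↪g G)

/-- The achromatic number of `G`: the largest `n` such that there is a graph homomorphism
from `G` onto the complete graph `K_n` which is surjective on edges (equivalently, a proper
colouring with `n` colours such that every pair of distinct colours appears on an edge). -/
noncomputable def SimpleGraph.achromaticNumber {α : Type*} (G : SimpleGraph α) : ℕ :=
  sSup {n : ℕ | ∃ φ : G →g completeGraph (Fin n), Function.Surjective φ ∧
    ∀ a b : Fin n, a ≠ b → ∃ u v, G.Adj u v ∧ φ u = a ∧ φ v = b}

section Aux

variable {α : Type*} {G : SimpleGraph α}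

private lemma twoK2_adj {i j : Fin 4} :
    twoK2.Adj i j ↔ (s(i, j) = s(0, 1) ∨ s(i, j) = s(2, 3)) ∧ i ≠ j := by
  simp [twoK2, SimpleGraph.fromEdgeSet_adj, Set.mem_insert_iff, Set.mem_singleton_iff]

/-- Build an embedding of a graph on `Fin 4` given four suitable vertices. -/
private lemma emb_of_four (H : SimpleGraph (Fin 4)) (w : Fin 4 → α)
    (hinj : Function.Injective w)
    (h1 : ∀ i j, H.Adj i j → G.Adj (w i) (w j))
    (h2 : ∀ i j, i ≠ j → ¬H.Adj i j → ¬G.Adj (w i) (w j)) :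
    Nonempty (H ↪g G) :=
  ⟨⟨⟨w, hinj⟩, by
    intro i j
    constructor
    · intro h
      by_contra hH
      have hij : i ≠ j := by
        rintro rfl
        exact G.loopless.irrefl _ h
      exact h2 i j hij hH h
    · exact h1 i j⟩⟩

/-- In a total, transitive, reflexive relation, every nonempty finset has a top element. -/
private lemma exists_top_of_total {β : Type*} (r : β → β → Prop)
    (hrefl : ∀ u, r u u) (htrans : ∀ u v w, r u v → r v w → r u w)
    (htot : ∀ u v, r u v ∨ r v u) :
    ∀ s : Finset β, s.Nonempty → ∃ m ∈ s, ∀ x ∈ s, r x m := by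
  classical
  intro s
  induction s using Finset.cons_induction with
  | empty => exact fun hs => absurd hs (by simp)
  | cons a t ha ih =>
    intro _
    by_cases hse : t.Nonempty
    · obtain ⟨m, hm, hmax⟩ := ih hse
      rcases htot a m with h | h
      · exact ⟨m, Finset.mem_cons_of_mem hm, fun x hx => by
          rcases Finset.mem_cons.mp hx with rfl | hx
          · exact h
          · exact hmax x hx⟩
      · exact ⟨a, Finset.mem_cons_self _ _, fun x hx => by
          rcases Finset.mem_cons.mp hx with rfl | hx
          · exact hrefl x
          · exact htrans x m a (hmax x hx) h⟩
    · rw [Finset.not_nonempty_iff_eq_empty] at hse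
      subst hse
      exact ⟨a, Finset.mem_cons_self _ _, fun x hx => by
        rcases Finset.mem_cons.mp hx with rfl | hx
        · exact hrefl x
        · simp at hx⟩

/-- Threshold graphs have a total vicinal preorder. -/
private lemma threshold_total (hG : G.IsThreshold) (u v : α) :
    (∀ x, G.Adj u x → x ≠ v → G.Adj v x) ∨ (∀ x, G.Adj v x → x ≠ u → G.Adj u x) := by
  classical
  obtain ⟨h2K2, hC4, hP4⟩ := hG
  by_contra hcon
  push_neg at hcon
  obtain ⟨⟨x, hux, hxv, hvx⟩, ⟨y, hvy, hyu, huy⟩⟩ := hcon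
  -- distinctness
  have hux' : u ≠ x := G.ne_of_adj hux
  have hvy' : v ≠ y := G.ne_of_adj hvy
  have hxy : x ≠ y := fun h => hvx (h ▸ hvy)
  have huv : u ≠ v := by
    rintro rfl
    exact hvx hux
  by_cases huv' : G.Adj u v <;> by_cases hxy' : G.Adj x y
  · -- C4 : u - x - y - v - u
    refine hC4.false (Classical.choice (emb_of_four _ ![u, x, y, v] ?_ ?_ ?_))
    · intro i j hij
      fin_cases i <;> fin_cases j <;> simp_all
    · intro i j hH
      fin_cases i <;> fin_cases j <;>
        first
          | exact absurd hH (by decide)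
          | exact hux | exact hux.symm | exact hxy' | exact hxy'.symm
          | exact hvy | exact hvy.symm | exact huv' | exact huv'.symm
    · intro i j hne hH
      fin_cases i <;> fin_cases j <;>
        first
          | exact absurd rfl hne
          | exact absurd (by decide) hH
          | exact huy | exact fun h => huy h.symm
          | exact hvx | exact fun h => hvx h.symm
  · -- P4 : x - u - v - y
    refine hP4.false (Classical.choice (emb_of_four _ ![x, u, v, y] ?_ ?_ ?_))
    · intro i j hij
      fin_cases i <;> fin_cases j <;> simp_all
    · intro i j hH
      fin_cases i <;> fin_cases j <;>
        first
          | exact absurd hH (by rw [SimpleGraph.pathGraph_adj]; decide)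
          | exact hux | exact hux.symm | exact huv' | exact huv'.symm
          | exact hvy | exact hvy.symm
    · intro i j hne hH
      fin_cases i <;> fin_cases j <;>
        first
          | exact absurd rfl hne
          | exact absurd (by rw [SimpleGraph.pathGraph_adj]; decide) hH
          | exact hvx | exact fun h => hvx h.symm
          | exact hxy' | exact fun h => hxy' h.symm
          | exact huy | exact fun h => huy h.symm
  · -- P4 : u - x - y - v
    refine hP4.false (Classical.choice (emb_of_four _ ![u, x, y, v] ?_ ?_ ?_))
    · intro i j hij
      fin_cases i <;> fin_cases j <;> simp_all
    · intro i j hH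
      fin_cases i <;> fin_cases j <;>
        first
          | exact absurd hH (by rw [SimpleGraph.pathGraph_adj]; decide)
          | exact hux | exact hux.symm | exact hxy' | exact hxy'.symm
          | exact hvy | exact hvy.symm
    · intro i j hne hH
      fin_cases i <;> fin_cases j <;>
        first
          | exact absurd rfl hne
          | exact absurd (by rw [SimpleGraph.pathGraph_adj]; decide) hH
          | exact huy | exact fun h => huy h.symm
          | exact huv' | exact fun h => huv' h.symm
          | exact hvx | exact fun h => hvx h.symm
  · -- 2K2 : edges u-x and v-y
    refine h2K2.false (Classical.choice (emb_of_four _ ![u, x, v, y] ?_ ?_ ?_))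
    · intro i j hij
      fin_cases i <;> fin_cases j <;> simp_all
    · intro i j hH
      fin_cases i <;> fin_cases j <;>
        first
          | exact absurd hH (by rw [twoK2_adj]; decide)
          | exact hux | exact hux.symm | exact hvy | exact hvy.symm
    · intro i j hne hH
      fin_cases i <;> fin_cases j <;>
        first
          | exact absurd rfl hne
          | exact absurd (by rw [twoK2_adj]; decide) hH
          | exact huv' | exact fun h => huv' h.symm
          | exact huy | exact fun h => huy h.symm
          | exact hvx | exact fun h => hvx h.symm
          | exact hxy' | exact fun h => hxy' h.symm

end Aux

/-- For a finite nonempty threshold graph `G`, the chromatic number equals the achromatic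
number. -/
theorem threshold_chromatic_eq_achromatic {α : Type*} [Fintype α] [Nonempty α]
    (G : SimpleGraph α) (hG : G.IsThreshold) :
    G.chromaticNumber = (G.achromaticNumber : ℕ∞) := by
  classical
  -- the vicinal preorder
  set r : α → α → Prop := fun u v => ∀ x, G.Adj u x → x ≠ v → G.Adj v x with hr
  have hrefl : ∀ u, r u u := fun u x hx _ => hx
  have htrans : ∀ u v w, r u v → r v w → r u w := by
    intro u v w huv hvw x hux hxw
    by_cases hxv : x = v
    · subst hxv
      by_cases huw : u = w
      · exact huw ▸ hux
      · have hwu : G.Adj w u := hvw u hux.symm huw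
        exact (huv w hwu.symm (Ne.symm hxw)).symm
    · exact hvw x (huv x hux hxv) hxw
  have htot : ∀ u v, r u v ∨ r v u := threshold_total hG
  set S := {n : ℕ | ∃ φ : G →g SimpleGraph.completeGraph (Fin n), Function.Surjective φ ∧
    ∀ a b : Fin n, a ≠ b → ∃ u v, G.Adj u v ∧ φ u = a ∧ φ v = b} with hSdef
  -- (a) every achromatic coloring yields a clique
  have hS_clique : ∀ n ∈ S, (n : ℕ∞) ≤ G.chromaticNumber := by
    intro n hn
    obtain ⟨φ, hsurj, hcomp⟩ := hn
    -- for each color pick a maximal vertex of its class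
    have hmax : ∀ c : Fin n, ∃ m : α, φ m = c ∧ ∀ x, φ x = c → r x m := by
      intro c
      obtain ⟨v, hv⟩ := hsurj c
      obtain ⟨m, hm, hmax⟩ := exists_top_of_total r hrefl htrans htot
        (Finset.univ.filter (fun x => φ x = c)) ⟨v, by simp [hv]⟩
      refine ⟨m, by simpa using hm, fun x hx => hmax x (by simp [hx])⟩
    choose f hf hfmax using hmax
    have hfinj : Function.Injective f := fun a b hab => by
      rw [← hf a, ← hf b, hab]
    -- the chosen vertices form a clique
    have hclique : G.IsClique (Finset.univ.image f : Finset α) := by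
      intro p hp q hq hpq
      simp only [Finset.coe_image, Finset.coe_univ, Set.image_univ, Set.mem_range] at hp hq
      obtain ⟨a, rfl⟩ := hp
      obtain ⟨b, rfl⟩ := hq
      have hab : a ≠ b := fun h => hpq (h ▸ rfl)
      obtain ⟨u, w, huw, hu, hw⟩ := hcomp a b hab
      have hwfa : w ≠ f a := by
        intro h'
        rw [h', hf a] at hw
        exact hab hw
      have h1 : G.Adj (f a) w := hfmax a u hu w huw hwfa
      have hfa_ne : f a ≠ f b := fun h => hab (hfinj h)
      have h2 : G.Adj (f b) (f a) := hfmax b w hw (f a) h1.symm hfa_ne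
      exact h2.symm
    have hcard : (Finset.univ.image f : Finset α).card = n := by
      rw [Finset.card_image_of_injective _ hfinj, Finset.card_univ, Fintype.card_fin]
    have := hclique.card_le_chromaticNumber
    rwa [hcard] at this
  -- (b) a minimal surjective coloring is achromatic and bounds χ above
  have hmem : ∃ m ∈ S, G.chromaticNumber ≤ (m : ℕ∞) := by
    set T := {n : ℕ | ∃ φ : G →g SimpleGraph.completeGraph (Fin n), Function.Surjective φ} with hT
    have hTne : (Fintype.card α) ∈ T := by
      refine ⟨⟨(Fintype.equivFin α : α → Fin (Fintype.card α)), ?_⟩,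
        (Fintype.equivFin α).surjective⟩
      intro u v huv
      exact fun h => G.ne_of_adj huv ((Fintype.equivFin α).injective h)
    have hmT : sInf T ∈ T := Nat.sInf_mem ⟨_, hTne⟩
    obtain ⟨m, hmdef⟩ : ∃ m, m = sInf T := ⟨_, rfl⟩
    rw [← hmdef] at hmT
    obtain ⟨φ, hsurj⟩ := hmT
    have hmpos : 0 < m := Fin.pos (φ (Classical.arbitrary α))
    have hcomp : ∀ a b : Fin m, a ≠ b → ∃ u v, G.Adj u v ∧ φ u = a ∧ φ v = b := by
      by_contra hcon
      push_neg at hcon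
      obtain ⟨a, b, hab, hnoedge⟩ := hcon
      -- no edge colored (b, a) either
      have hnoedge' : ∀ u v, G.Adj u v → φ u = b → φ v = a → False := fun u v h hu hv =>
        (hnoedge v u h.symm hv hu).elim
      -- merge color b into a
      set ψ : α → Fin m := fun v => if φ v = b then a else φ v with hψ
      have hψne : ∀ v, ψ v ≠ b := by
        intro v
        simp only [hψ]
        split
        · exact hab
        · assumption
      have hψadj : ∀ {u v}, G.Adj u v → ψ u ≠ ψ v := by
        intro u v huv
        simp only [hψ]
        split <;> split
        · rename_i h1 h2; exact absurd (h1.trans h2.symm) (φ.map_adj huv)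
        · rename_i h1 h2
          intro h3
          exact hnoedge' u v huv h1 h3.symm
        · rename_i h1 h2
          intro h3
          exact hnoedge' v u huv.symm h2 h3
        · exact φ.map_adj huv
      -- compress to m - 1 colors
      obtain ⟨k, hk⟩ : ∃ k, m = k + 1 := ⟨m - 1, (Nat.succ_pred_eq_of_pos hmpos).symm⟩
      subst hk
      have hψ' : ∀ v, ∃ j : Fin k, b.succAbove j = ψ v := fun v =>
        Fin.exists_succAbove_eq (hψne v)
      choose ρ hρ using hψ'
      have hρadj : ∀ {u v}, G.Adj u v → ρ u ≠ ρ v := by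
        intro u v huv h
        exact hψadj huv (by rw [← hρ u, ← hρ v, h])
      have hρsurj : Function.Surjective ρ := by
        intro j
        have hjb : b.succAbove j ≠ b := Fin.succAbove_ne b j
        obtain ⟨v, hv⟩ := hsurj (b.succAbove j)
        have hψv : ψ v = b.succAbove j := by
          simp only [hψ, hv]
          split
          · exact absurd (by assumption) hjb
          · rfl
        refine ⟨v, Fin.succAbove_right_injective (p := b) ?_⟩
        rw [hρ v, hψv]
      have hkT : k ∈ T := ⟨⟨ρ, fun huv => hρadj huv⟩, hρsurj⟩
      have hle : sInf T ≤ k := Nat.sInf_le hkT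
      rw [← hmdef] at hle
      omega
    refine ⟨m, ⟨φ, hsurj, hcomp⟩, ?_⟩
    exact SimpleGraph.Colorable.chromaticNumber_le ⟨φ⟩
  obtain ⟨m, hmS, hm⟩ := hmem
  have h1 : G.chromaticNumber = (m : ℕ∞) := le_antisymm hm (hS_clique m hmS)
  have hbdd : ∀ n ∈ S, n ≤ m := by
    intro n hn
    have := hS_clique n hn
    rw [h1] at this
    exact_mod_cast this
  have h2 : G.achromaticNumber = m := by
    unfold SimpleGraph.achromaticNumber
    exact le_antisymm (csSup_le ⟨m, hmS⟩ hbdd) (le_csSup ⟨m, hbdd⟩ hmS)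
  rw [h1, h2]
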